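/- Let d, n ≥ 1 and let A₁, …, A_d : ℝ^d → M_n(ℂ) be continuously differentiable matrix-valued maps satisfying the exponential (Crönström) gauge condition Σ_{k=1}^d x^k A_k(x) = 0 for all x ∈ ℝ^d. Define the curvature F_{ℓk} = ∂_ℓ A_k − ∂_k A_ℓ + [A_ℓ, A_k] (matrix commutator). Then for every x ∈ ℝ^d and every k = 1, …, d one has A_k(x) = ∫₀¹ Σ_{ℓ=1}^d x^ℓ F_{ℓk}(s x) · s ds. -/

import Mathlib

noncomputable section
open MeasureTheory Filter Topology

attribute [local instance] Matrix.frobeniusNormedAddCommGroup Matrix.frobeniusNormedSpace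

variable {d n : ℕ}

/-- Partial derivative `∂_ℓ` of a map on `ℝ^d`. -/
def pd {E : Type*} [NormedAddCommGroup E] [NormedSpace ℝ E]
    (ℓ : Fin d) (f : (Fin d → ℝ) → E) (x : Fin d → ℝ) : E :=
  fderiv ℝ f x (Pi.single ℓ 1)

/-- Curvature `F_{ℓk} = ∂_ℓ A_k − ∂_k A_ℓ + [A_ℓ, A_k]` of a connection
`A : ℝ^d → M_n(ℂ)^d`. -/
def curvF (A : Fin d → (Fin d → ℝ) → Matrix (Fin n) (Fin n) ℂ)
    (ℓ k : Fin d) (x : Fin d → ℝ) : Matrix (Fin n) (Fin n) ℂ :=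
  pd ℓ (A k) x - pd k (A ℓ) x + (A ℓ x * A k x - A k x * A ℓ x)

/-- in the exponential (Crönström) gauge `Σ_k x^k A_k(x) = 0`, the
connection is recovered from its curvature by
`A_k(x) = ∫₀¹ Σ_ℓ x^ℓ F_{ℓk}(sx) s ds`. -/
theorem exponential_gauge_recovery
    {d n : ℕ} (hd : 1 ≤ d) (hn : 1 ≤ n)
    (A : Fin d → (Fin d → ℝ) → Matrix (Fin n) (Fin n) ℂ)
    (hA : ∀ k, ContDiff ℝ 1 (A k))
    (hgauge : ∀ x : Fin d → ℝ, ∑ k : Fin d, x k • A k x = 0) :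
    ∀ (x : Fin d → ℝ) (k : Fin d),
      A k x = ∫ s in (0 : ℝ)..1, s • (∑ ℓ : Fin d, x ℓ • curvF A ℓ k (s • x)) := by
  intro x k
  have hdiff : ∀ ℓ, Differentiable ℝ (A ℓ) := fun ℓ => (hA ℓ).differentiable one_ne_zero
  -- key : differentiated gauge condition
  have key : ∀ y : Fin d → ℝ,
      A k y + ∑ ℓ : Fin d, y ℓ • pd k (A ℓ) y = 0 := by
    intro y
    have hterm : ∀ ℓ : Fin d, HasFDerivAt (fun z : Fin d → ℝ => z ℓ • A ℓ z)
        (y ℓ • fderiv ℝ (A ℓ) y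
          + (ContinuousLinearMap.proj ℓ : (Fin d → ℝ) →L[ℝ] ℝ).smulRight (A ℓ y)) y := by
      intro ℓ
      have hc : HasFDerivAt (fun z : Fin d → ℝ => z ℓ)
          (ContinuousLinearMap.proj ℓ : (Fin d → ℝ) →L[ℝ] ℝ) y :=
        (ContinuousLinearMap.proj (R := ℝ) (φ := fun _ : Fin d => ℝ) ℓ).hasFDerivAt
      exact hc.smul ((hdiff ℓ y).hasFDerivAt)
    have hsum := HasFDerivAt.fun_sum (fun ℓ (_ : ℓ ∈ Finset.univ) => hterm ℓ)
    have h0 : HasFDerivAt (fun z : Fin d → ℝ => ∑ ℓ : Fin d, z ℓ • A ℓ z)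
        (0 : (Fin d → ℝ) →L[ℝ] Matrix (Fin n) (Fin n) ℂ) y := by
      have hfe : (fun z : Fin d → ℝ => ∑ ℓ : Fin d, z ℓ • A ℓ z)
          = fun _ => (0 : Matrix (Fin n) (Fin n) ℂ) := funext hgauge
      rw [hfe]; exact hasFDerivAt_const 0 y
    have heq := hsum.unique h0
    have hev := congrArg (fun L : (Fin d → ℝ) →L[ℝ] Matrix (Fin n) (Fin n) ℂ =>
      L ((Pi.single k 1 : Fin d → ℝ))) heq
    erw [sum_apply (f := fun i => y i • fderiv ℝ (A i) y
      + (ContinuousLinearMap.proj i : (Fin d → ℝ) →L[ℝ] ℝ).smulRight (A i y))] at hev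
    simp only [ContinuousLinearMap.sum_apply, ContinuousLinearMap.add_apply,
      ContinuousLinearMap.smul_apply, ContinuousLinearMap.smulRight_apply,
      ContinuousLinearMap.proj_apply, ContinuousLinearMap.zero_apply] at hev
    have hsingle : ∑ ℓ : Fin d, (Pi.single k 1 : Fin d → ℝ) ℓ • A ℓ y = A k y := by
      rw [Finset.sum_eq_single k]
      · simp
      · intro b _ hb; simp [Pi.single_apply, hb]
      · simp
    rw [Finset.sum_add_distrib, hsingle] at hev
    rw [add_comm]
    exact hev
  -- directional derivative decomposition
  have hdir : ∀ y : Fin d → ℝ,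
      (fderiv ℝ (A k) y) x = ∑ ℓ : Fin d, x ℓ • pd ℓ (A k) y := by
    intro y
    have hx : x = ∑ ℓ : Fin d, x ℓ • (Pi.single ℓ 1 : Fin d → ℝ) := by
      ext j; simp [Pi.single_apply]
    conv_lhs => rw [hx]
    rw [map_sum]
    simp [pd]; rfl
  -- derivative of s ↦ s • A k (s • x)
  have hg : ∀ s : ℝ, HasDerivAt (fun t : ℝ => t • A k (t • x))
      (A k (s • x) + s • (fderiv ℝ (A k) (s • x)) x) s := by
    intro s
    have h1 : HasDerivAt (fun t : ℝ => t • x) x s := by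
      simpa using (hasDerivAt_id s).smul_const x
    have h2 : HasDerivAt (fun t : ℝ => A k (t • x)) ((fderiv ℝ (A k) (s • x)) x) s := by
      exact ((hdiff k (s • x)).hasFDerivAt).comp_hasDerivAt s h1
    have h3 := (hasDerivAt_id s).fun_smul h2
    have h4 : HasDerivAt (fun t : ℝ => t • A k (t • x))
        (id s • (fderiv ℝ (A k) (s • x)) x + (1 : ℝ) • A k (s • x)) s := h3
    simpa [add_comm] using h4
  -- continuity of the derivative
  have hcont : Continuous (fun s : ℝ => A k (s • x) + s • (fderiv ℝ (A k) (s • x)) x) := by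
    have hc1 : Continuous fun s : ℝ => s • x := continuous_id.smul continuous_const
    have hc2 : Continuous (fderiv ℝ (A k)) := (hA k).continuous_fderiv one_ne_zero
    exact ((hA k).continuous.comp hc1).add
      (continuous_id.smul ((hc2.comp hc1).clm_apply continuous_const))
  -- the integrand equals the derivative
  have hinteg : ∀ s : ℝ, s • (∑ ℓ : Fin d, x ℓ • curvF A ℓ k (s • x))
      = A k (s • x) + s • (fderiv ℝ (A k) (s • x)) x := by
    intro s
    set y := s • x with hy
    have hyℓ : ∀ ℓ, y ℓ = s * x ℓ := fun ℓ => rfl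
    have hzero : ∑ ℓ : Fin d, (s * x ℓ) • A ℓ y = 0 := by
      have := hgauge y
      simpa [hyℓ] using this
    have hQ : ∑ ℓ : Fin d, (s * x ℓ) • pd k (A ℓ) y = - A k y := by
      have := key y
      have h' : ∑ ℓ : Fin d, y ℓ • pd k (A ℓ) y = - A k y := by
        linear_combination (norm := abel) this
      simpa [hyℓ] using h'
    have hC : ∑ ℓ : Fin d, (s * x ℓ) • (A ℓ y * A k y - A k y * A ℓ y) = 0 := by
      have e1 : ∑ ℓ : Fin d, (s * x ℓ) • (A ℓ y * A k y)
          = (∑ ℓ : Fin d, (s * x ℓ) • A ℓ y) * A k y := by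
        rw [Finset.sum_mul]; simp [smul_mul_assoc]
      have e2 : ∑ ℓ : Fin d, (s * x ℓ) • (A k y * A ℓ y)
          = A k y * (∑ ℓ : Fin d, (s * x ℓ) • A ℓ y) := by
        rw [Finset.mul_sum]; simp [mul_smul_comm]
      calc ∑ ℓ : Fin d, (s * x ℓ) • (A ℓ y * A k y - A k y * A ℓ y)
          = (∑ ℓ : Fin d, (s * x ℓ) • (A ℓ y * A k y))
            - ∑ ℓ : Fin d, (s * x ℓ) • (A k y * A ℓ y) := by
            rw [← Finset.sum_sub_distrib]; simp [smul_sub]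
        _ = 0 := by rw [e1, e2, hzero]; simp
    have hP : ∑ ℓ : Fin d, (s * x ℓ) • pd ℓ (A k) y = s • (fderiv ℝ (A k) y) x := by
      rw [hdir y, Finset.smul_sum]
      simp [smul_smul]
    calc s • (∑ ℓ : Fin d, x ℓ • curvF A ℓ k y)
        = ∑ ℓ : Fin d, (s * x ℓ) • curvF A ℓ k y := by
          rw [Finset.smul_sum]; simp [smul_smul]
      _ = ∑ ℓ : Fin d, ((s * x ℓ) • pd ℓ (A k) y - (s * x ℓ) • pd k (A ℓ) y
            + (s * x ℓ) • (A ℓ y * A k y - A k y * A ℓ y)) := by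
          simp [curvF, smul_sub, smul_add]
      _ = (∑ ℓ : Fin d, (s * x ℓ) • pd ℓ (A k) y)
            - (∑ ℓ : Fin d, (s * x ℓ) • pd k (A ℓ) y)
            + ∑ ℓ : Fin d, (s * x ℓ) • (A ℓ y * A k y - A k y * A ℓ y) := by
          rw [Finset.sum_add_distrib, Finset.sum_sub_distrib]
      _ = s • (fderiv ℝ (A k) y) x - (- A k y) + 0 := by rw [hP, hQ, hC]
      _ = A k y + s • (fderiv ℝ (A k) y) x := by abel
  -- FTC
  have hFTC := intervalIntegral.integral_eq_sub_of_hasDerivAt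
      (f := fun t : ℝ => t • A k (t • x)) (fun s _ => hg s)
      (hcont.intervalIntegrable 0 1)
  have : ∫ s in (0:ℝ)..1, s • (∑ ℓ : Fin d, x ℓ • curvF A ℓ k (s • x))
      = ∫ s in (0:ℝ)..1, (A k (s • x) + s • (fderiv ℝ (A k) (s • x)) x) := by
    apply intervalIntegral.integral_congr
    intro s _
    exact hinteg s
  rw [this, hFTC]
  simp
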